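/- Let a, τ, V be positive real numbers and let ℓ, N be natural numbers with ℓ ≤ N. Define ψ₀(z) = ℓ − N·|z|²/(1+|z|²) and Φ(z) = |z|^(2ℓ)/(1+|z|²)^N for z ∈ ℂ. Then the complex number (2·i·a/τ²) · ∫_ℂ [ψ₀(z)·((2N − V·τ²/(2π)) + (V/(2π))·Φ(z)) − (V/(2π))·((|z|²−1)/(|z|²+1))·Φ(z)] · (2/(1+|z|²)²) dA(z) equals i·a·(V − 4πN/τ²)·(N − 2ℓ). (This is the explicit evaluation of the Einstein–Maxwell–Higgs Futaki invariant: F_{ℓ,N,V,τ} = i·a·(V − 4πN/τ²)·(N − 2ℓ).) -/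

import Mathlib

open MeasureTheory Set Real Filter Topology

lemma my_complex_integral_comp_abs (f : ℝ → ℝ) :
    ∫ z : ℂ, f (‖z‖) = (2 * π) * ∫ x in Ioi (0:ℝ), x * f x := by
  calc
    _ = ∫ p in Ioi (0:ℝ) ×ˢ Ioo (-π) π, p.1 • f |p.1| := by
      rw [← Complex.integral_comp_polarCoord_symm,
        show polarCoord.target = Ioi (0:ℝ) ×ˢ Ioo (-π) π from rfl]
      simp_rw [Complex.norm_polarCoord_symm]
    _ = (∫ x in Ioi (0:ℝ), x * f |x|) * ∫ _ in Ioo (-π) π, (1:ℝ) := by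
      rw [← setIntegral_prod_mul, Measure.volume_eq_prod]
      simp_rw [smul_eq_mul, mul_one]
    _ = 2 * π * ∫ x in Ioi (0:ℝ), x * f |x| := by
      simp_rw [integral_const, MeasureTheory.measureReal_restrict_apply MeasurableSet.univ,
        Set.univ_inter, Real.volume_real_Ioo, sub_neg_eq_add, ← two_mul,
        max_eq_left (by positivity : (0:ℝ) ≤ 2 * π), smul_eq_mul, mul_one, mul_comm]
    _ = 2 * π * ∫ x in Ioi (0:ℝ), x * f x := by
      congr 1
      refine setIntegral_congr_fun measurableSet_Ioi (fun x hx => ?_)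
      rw [abs_of_pos hx]

set_option maxHeartbeats 2000000 in
lemma my_radial_eval (A c : ℝ) (ℓ N : ℕ) (hℓN : ℓ ≤ N) :
    ∫ x in Ioi (0:ℝ), x *
      ((((ℓ:ℝ) - (N:ℝ) * x ^ 2 / (1 + x ^ 2)) *
          (A + c * (x ^ (2 * ℓ) / (1 + x ^ 2) ^ N)) -
        c * ((x ^ 2 - 1) / (x ^ 2 + 1)) * (x ^ (2 * ℓ) / (1 + x ^ 2) ^ N)) *
        (2 / (1 + x ^ 2) ^ 2))
    = A * ((ℓ:ℝ) - (N:ℝ) / 2) := by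
  have hu : ∀ x : ℝ, (0:ℝ) < 1 + x ^ 2 := fun x => by positivity
  have h1 : ∀ x : ℝ, HasDerivAt (fun x : ℝ => 1 + x ^ 2) (2 * x) x := fun x => by
    simpa using (hasDerivAt_pow 2 x).const_add 1
  have htop : Tendsto (fun x : ℝ => 1 + x ^ 2) atTop atTop :=
    tendsto_atTop_add_const_left _ 1 (tendsto_pow_atTop two_ne_zero)
  -- the derivative identity
  have hder : ∀ x : ℝ, HasDerivAt (fun x : ℝ => A * ((N:ℝ) - (ℓ:ℝ)) * (1 + x ^ 2)⁻¹
      - A * (N:ℝ) / 2 * ((1 + x ^ 2) ^ 2)⁻¹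
      + c * (x ^ (2 * ℓ + 2) / (1 + x ^ 2) ^ (N + 2)))
      (x * ((((ℓ:ℝ) - (N:ℝ) * x ^ 2 / (1 + x ^ 2)) *
          (A + c * (x ^ (2 * ℓ) / (1 + x ^ 2) ^ N)) -
        c * ((x ^ 2 - 1) / (x ^ 2 + 1)) * (x ^ (2 * ℓ) / (1 + x ^ 2) ^ N)) *
        (2 / (1 + x ^ 2) ^ 2))) x := by
    intro x
    have d1 : HasDerivAt (fun x : ℝ => (1 + x ^ 2)⁻¹)
        (-(2 * x) / (1 + x ^ 2) ^ 2) x := (h1 x).inv (hu x).ne'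
    have d2 : HasDerivAt (fun x : ℝ => ((1 + x ^ 2) ^ 2)⁻¹)
        (-(↑2 * (1 + x ^ 2) ^ (2 - 1) * (2 * x)) / ((1 + x ^ 2) ^ 2) ^ 2) x :=
      ((h1 x).pow 2).inv (by show (1 + x ^ 2) ^ 2 ≠ 0; positivity)
    have d3 : HasDerivAt (fun x : ℝ => x ^ (2 * ℓ + 2) / (1 + x ^ 2) ^ (N + 2))
        (((↑(2 * ℓ + 2) * x ^ (2 * ℓ + 2 - 1)) * (1 + x ^ 2) ^ (N + 2)
          - x ^ (2 * ℓ + 2) * (↑(N + 2) * (1 + x ^ 2) ^ (N + 2 - 1) * (2 * x)))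
          / ((1 + x ^ 2) ^ (N + 2)) ^ 2) x :=
      (hasDerivAt_pow (2 * ℓ + 2) x).div ((h1 x).pow (N + 2)) (by positivity)
    have key : HasDerivAt (fun x : ℝ => A * ((N:ℝ) - (ℓ:ℝ)) * (1 + x ^ 2)⁻¹
        - A * (N:ℝ) / 2 * ((1 + x ^ 2) ^ 2)⁻¹
        + c * (x ^ (2 * ℓ + 2) / (1 + x ^ 2) ^ (N + 2))) _ x := ((d1.const_mul (A * ((N:ℝ) - (ℓ:ℝ)))).sub
        (d2.const_mul (A * (N:ℝ) / 2))).add (d3.const_mul c)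
    convert key using 1
    have e1 : (1 + x ^ 2) ≠ 0 := (hu x).ne'
    have e2 : (1 + x ^ 2) ^ N ≠ 0 := by positivity
    have e3 : (x ^ 2 + 1) ≠ 0 := by positivity
    have e4 : ((1:ℝ) + x ^ 2) ^ (N + 2) ≠ 0 := by positivity
    simp only [show N + 2 - 1 = N + 1 from rfl, show 2 * ℓ + 2 - 1 = 2 * ℓ + 1 from rfl,
      show (2:ℕ) - 1 = 1 from rfl, pow_one, Nat.cast_add, Nat.cast_mul, Nat.cast_ofNat]
    field_simp
    ring
  -- limit at infinity
  have hlim : Tendsto (fun x : ℝ => A * ((N:ℝ) - (ℓ:ℝ)) * (1 + x ^ 2)⁻¹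
      - A * (N:ℝ) / 2 * ((1 + x ^ 2) ^ 2)⁻¹
      + c * (x ^ (2 * ℓ + 2) / (1 + x ^ 2) ^ (N + 2))) atTop (𝓝 0) := by
    have t1 : Tendsto (fun x : ℝ => A * ((N:ℝ) - (ℓ:ℝ)) * (1 + x ^ 2)⁻¹) atTop (𝓝 0) := by
      simpa using htop.inv_tendsto_atTop.const_mul (A * ((N:ℝ) - (ℓ:ℝ)))
    have t2 : Tendsto (fun x : ℝ => A * (N:ℝ) / 2 * ((1 + x ^ 2) ^ 2)⁻¹) atTop (𝓝 0) := by
      simpa using (((tendsto_pow_atTop two_ne_zero).comp htop).inv_tendsto_atTop).const_mul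
        (A * (N:ℝ) / 2)
    have t3 : Tendsto (fun x : ℝ => c * (x ^ (2 * ℓ + 2) / (1 + x ^ 2) ^ (N + 2)))
        atTop (𝓝 0) := by
      apply squeeze_zero_norm' (a := fun x : ℝ => |c| * (1 + x ^ 2)⁻¹)
      · filter_upwards [eventually_ge_atTop (0:ℝ)] with x hx
        have hq : x ^ (2 * ℓ + 2) / (1 + x ^ 2) ^ (N + 2) ≤ (1 + x ^ 2)⁻¹ := by
          rw [div_le_iff₀ (by positivity)]
          calc x ^ (2 * ℓ + 2) = (x ^ 2) ^ (ℓ + 1) := by rw [← pow_mul]; ring_nf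
            _ ≤ (1 + x ^ 2) ^ (ℓ + 1) := by
                apply pow_le_pow_left₀ (by positivity) (by nlinarith)
            _ ≤ (1 + x ^ 2) ^ (N + 1) := by
                apply pow_le_pow_right₀ (by nlinarith) (by omega)
            _ = (1 + x ^ 2)⁻¹ * (1 + x ^ 2) ^ (N + 2) := by
                rw [pow_succ (1 + x ^ 2) (N + 1)]
                field_simp
        have h0 : (0:ℝ) ≤ x ^ (2 * ℓ + 2) / (1 + x ^ 2) ^ (N + 2) := by positivity
        rw [norm_mul, Real.norm_eq_abs, Real.norm_eq_abs, abs_of_nonneg h0]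
        exact mul_le_mul_of_nonneg_left hq (abs_nonneg c)
      · simpa using htop.inv_tendsto_atTop.const_mul |c|
    have := (t1.sub t2).add t3
    simpa using this
  -- integrability
  have hC : (0:ℝ) ≤ 2 * (((ℓ:ℝ) + N) * (|A| + |c|) + |c|) := by positivity
  set C : ℝ := 2 * (((ℓ:ℝ) + N) * (|A| + |c|) + |c|) with hCdef
  have hint : IntegrableOn (fun x : ℝ => x *
      ((((ℓ:ℝ) - (N:ℝ) * x ^ 2 / (1 + x ^ 2)) *
          (A + c * (x ^ (2 * ℓ) / (1 + x ^ 2) ^ N)) -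
        c * ((x ^ 2 - 1) / (x ^ 2 + 1)) * (x ^ (2 * ℓ) / (1 + x ^ 2) ^ N)) *
        (2 / (1 + x ^ 2) ^ 2))) (Ioi (0:ℝ)) := by
    have hmaj : IntegrableOn (fun x : ℝ => C * (x / (1 + x ^ 2) ^ 2)) (Ioi (0:ℝ)) := by
      apply integrableOn_Ioi_deriv_of_nonneg' (g := fun x : ℝ => -(C / 2) * (1 + x ^ 2)⁻¹)
        (l := 0)
      · intro x _
        have : HasDerivAt (fun x : ℝ => -(C / 2) * (1 + x ^ 2)⁻¹)
            (-(C / 2) * (-(2 * x) / (1 + x ^ 2) ^ 2)) x :=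
          ((h1 x).inv (hu x).ne').const_mul (-(C / 2))
        convert this using 1
        have e1 : (1 + x ^ 2) ≠ 0 := (hu x).ne'
        field_simp
      · intro x hx
        have : (0:ℝ) < x := hx
        positivity
      · simpa using htop.inv_tendsto_atTop.const_mul (-(C / 2))
    apply Integrable.mono' hmaj
    · apply Continuous.aestronglyMeasurable
      have c1 : Continuous fun x : ℝ => 1 + x ^ 2 := by continuity
      have cψ : Continuous fun x : ℝ => (ℓ:ℝ) - (N:ℝ) * x ^ 2 / (1 + x ^ 2) :=
        continuous_const.sub ((continuous_const.mul (continuous_pow 2)).div c1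
          fun x => (hu x).ne')
      have cΦ : Continuous fun x : ℝ => x ^ (2 * ℓ) / (1 + x ^ 2) ^ N :=
        (continuous_pow _).div (c1.pow N) fun x => by positivity
      have cr : Continuous fun x : ℝ => (x ^ 2 - 1) / (x ^ 2 + 1) :=
        ((continuous_pow 2).sub continuous_const).div
          ((continuous_pow 2).add continuous_const) fun x => by positivity
      have c4 : Continuous fun x : ℝ => 2 / (1 + x ^ 2) ^ 2 :=
        continuous_const.div (c1.pow 2) fun x => by positivity
      exact continuous_id.mul (((cψ.mul (continuous_const.add (continuous_const.mul cΦ))).sub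
        ((continuous_const.mul cr).mul cΦ)).mul c4)
    · rw [ae_restrict_iff' measurableSet_Ioi]
      apply ae_of_all
      intro x hx
      have hx0 : (0:ℝ) < x := hx
      have hΦ0 : (0:ℝ) ≤ x ^ (2 * ℓ) / (1 + x ^ 2) ^ N := by positivity
      have hΦ1 : x ^ (2 * ℓ) / (1 + x ^ 2) ^ N ≤ 1 := by
        rw [div_le_one (by positivity)]
        calc x ^ (2 * ℓ) = (x ^ 2) ^ ℓ := by rw [← pow_mul]
          _ ≤ (1 + x ^ 2) ^ ℓ := pow_le_pow_left₀ (by positivity) (by nlinarith) ℓ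
          _ ≤ (1 + x ^ 2) ^ N := pow_le_pow_right₀ (by nlinarith) hℓN
      have hψ : |(ℓ:ℝ) - (N:ℝ) * x ^ 2 / (1 + x ^ 2)| ≤ (ℓ:ℝ) + N := by
        have h0 : (0:ℝ) ≤ (N:ℝ) * x ^ 2 / (1 + x ^ 2) := by positivity
        have h1' : (N:ℝ) * x ^ 2 / (1 + x ^ 2) ≤ N := by
          rw [div_le_iff₀ (hu x)]
          have : (0:ℝ) ≤ (N:ℝ) := Nat.cast_nonneg N
          nlinarith
        have hl0 : (0:ℝ) ≤ (ℓ:ℝ) := Nat.cast_nonneg ℓ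
        rw [abs_le]; constructor <;> linarith
      have hr : |(x ^ 2 - 1) / (x ^ 2 + 1)| ≤ 1 := by
        rw [abs_div, abs_of_pos (by positivity : (0:ℝ) < x ^ 2 + 1),
          div_le_one (by positivity), abs_le]
        constructor <;> nlinarith
      have b1 : |A + c * (x ^ (2 * ℓ) / (1 + x ^ 2) ^ N)| ≤ |A| + |c| := by
        calc |A + c * (x ^ (2 * ℓ) / (1 + x ^ 2) ^ N)|
            ≤ |A| + |c * (x ^ (2 * ℓ) / (1 + x ^ 2) ^ N)| := abs_add_le _ _
          _ ≤ |A| + |c| := by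
              rw [abs_mul, abs_of_nonneg hΦ0]
              nlinarith [abs_nonneg c]
      have hB : |((ℓ:ℝ) - (N:ℝ) * x ^ 2 / (1 + x ^ 2)) *
          (A + c * (x ^ (2 * ℓ) / (1 + x ^ 2) ^ N)) -
          c * ((x ^ 2 - 1) / (x ^ 2 + 1)) * (x ^ (2 * ℓ) / (1 + x ^ 2) ^ N)| ≤ C / 2 := by
        calc |((ℓ:ℝ) - (N:ℝ) * x ^ 2 / (1 + x ^ 2)) *
            (A + c * (x ^ (2 * ℓ) / (1 + x ^ 2) ^ N)) -
            c * ((x ^ 2 - 1) / (x ^ 2 + 1)) * (x ^ (2 * ℓ) / (1 + x ^ 2) ^ N)|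
            ≤ |((ℓ:ℝ) - (N:ℝ) * x ^ 2 / (1 + x ^ 2)) *
              (A + c * (x ^ (2 * ℓ) / (1 + x ^ 2) ^ N))| +
              |c * ((x ^ 2 - 1) / (x ^ 2 + 1)) * (x ^ (2 * ℓ) / (1 + x ^ 2) ^ N)| :=
                abs_sub _ _
          _ ≤ ((ℓ:ℝ) + N) * (|A| + |c|) + |c| := by
              rw [abs_mul, abs_mul, abs_mul, abs_of_nonneg hΦ0]
              have g1 : |(ℓ:ℝ) - (N:ℝ) * x ^ 2 / (1 + x ^ 2)| *
                  |A + c * (x ^ (2 * ℓ) / (1 + x ^ 2) ^ N)| ≤ ((ℓ:ℝ) + N) * (|A| + |c|) :=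
                mul_le_mul hψ b1 (abs_nonneg _) (by positivity)
              have g2 : |c| * |(x ^ 2 - 1) / (x ^ 2 + 1)| *
                  (x ^ (2 * ℓ) / (1 + x ^ 2) ^ N) ≤ |c| := by
                have := mul_le_mul (mul_le_mul_of_nonneg_left hr (abs_nonneg c)) hΦ1
                  hΦ0 (by positivity : (0:ℝ) ≤ |c| * 1)
                simpa using this
              linarith
          _ = C / 2 := by rw [hCdef]; ring
      have hfx : ‖x * ((((ℓ:ℝ) - (N:ℝ) * x ^ 2 / (1 + x ^ 2)) *
          (A + c * (x ^ (2 * ℓ) / (1 + x ^ 2) ^ N)) -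
          c * ((x ^ 2 - 1) / (x ^ 2 + 1)) * (x ^ (2 * ℓ) / (1 + x ^ 2) ^ N)) *
          (2 / (1 + x ^ 2) ^ 2))‖ = x * (2 / (1 + x ^ 2) ^ 2) *
          |((ℓ:ℝ) - (N:ℝ) * x ^ 2 / (1 + x ^ 2)) *
            (A + c * (x ^ (2 * ℓ) / (1 + x ^ 2) ^ N)) -
            c * ((x ^ 2 - 1) / (x ^ 2 + 1)) * (x ^ (2 * ℓ) / (1 + x ^ 2) ^ N)| := by
        simp only [Real.norm_eq_abs, abs_mul]
        rw [abs_of_pos hx0, abs_of_pos (by positivity : (0:ℝ) < 2 / (1 + x ^ 2) ^ 2)]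
        ring
      rw [hfx]
      calc x * (2 / (1 + x ^ 2) ^ 2) * _ ≤ x * (2 / (1 + x ^ 2) ^ 2) * (C / 2) :=
            mul_le_mul_of_nonneg_left hB (by positivity)
        _ = C * (x / (1 + x ^ 2) ^ 2) := by ring
  -- conclusion
  have h0pow : (0:ℝ) ^ (2 * ℓ + 2) = 0 := zero_pow (by omega)
  have hval := integral_Ioi_of_hasDerivAt_of_tendsto' (a := 0) (fun x _ => hder x) hint hlim
  rw [hval]
  simp [h0pow]
  ring

open Real in
theorem futaki_invariant_evaluation (a τ V : ℝ) (ha : 0 < a) (hτ : 0 < τ) (hV : 0 < V)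
    (ℓ N : ℕ) (hℓN : ℓ ≤ N) :
    (2 * Complex.I * (a : ℂ) / (τ : ℂ) ^ 2) *
      ∫ z : ℂ,
        ((((ℓ : ℝ) - (N : ℝ) * ‖z‖ ^ 2 / (1 + ‖z‖ ^ 2)) *
            ((2 * (N : ℝ) - V * τ ^ 2 / (2 * π)) +
              (V / (2 * π)) * (‖z‖ ^ (2 * ℓ) / (1 + ‖z‖ ^ 2) ^ N)) -
          (V / (2 * π)) * ((‖z‖ ^ 2 - 1) / (‖z‖ ^ 2 + 1)) *
            (‖z‖ ^ (2 * ℓ) / (1 + ‖z‖ ^ 2) ^ N)) *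
          (2 / (1 + ‖z‖ ^ 2) ^ 2) : ℝ)
    = Complex.I * (a : ℂ) * ((V - 4 * π * (N : ℝ) / τ ^ 2 : ℝ) : ℂ) * (((N : ℝ) - 2 * (ℓ : ℝ) : ℝ) : ℂ) := by

  have key : (∫ z : ℂ,
        ((((ℓ : ℝ) - (N : ℝ) * ‖z‖ ^ 2 / (1 + ‖z‖ ^ 2)) *
            ((2 * (N : ℝ) - V * τ ^ 2 / (2 * π)) +
              (V / (2 * π)) * (‖z‖ ^ (2 * ℓ) / (1 + ‖z‖ ^ 2) ^ N)) -
          (V / (2 * π)) * ((‖z‖ ^ 2 - 1) / (‖z‖ ^ 2 + 1)) *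
            (‖z‖ ^ (2 * ℓ) / (1 + ‖z‖ ^ 2) ^ N)) *
          (2 / (1 + ‖z‖ ^ 2) ^ 2) : ℝ))
      = (2 * π) * ((2 * (N:ℝ) - V * τ ^ 2 / (2 * π)) * ((ℓ:ℝ) - (N:ℝ) / 2)) := by
    rw [my_complex_integral_comp_abs (fun x : ℝ =>
      (((ℓ : ℝ) - (N : ℝ) * x ^ 2 / (1 + x ^ 2)) *
            ((2 * (N : ℝ) - V * τ ^ 2 / (2 * π)) +
              (V / (2 * π)) * (x ^ (2 * ℓ) / (1 + x ^ 2) ^ N)) -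
          (V / (2 * π)) * ((x ^ 2 - 1) / (x ^ 2 + 1)) *
            (x ^ (2 * ℓ) / (1 + x ^ 2) ^ N)) *
          (2 / (1 + x ^ 2) ^ 2))]
    rw [my_radial_eval (2 * (N:ℝ) - V * τ ^ 2 / (2 * π)) (V / (2 * π)) ℓ N hℓN]
  rw [key]
  have hτ' : (τ:ℂ) ≠ 0 := Complex.ofReal_ne_zero.mpr hτ.ne'
  have hπ' : (π:ℂ) ≠ 0 := Complex.ofReal_ne_zero.mpr Real.pi_ne_zero
  push_cast
  field_simp
  ring
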